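/- For deflations f and g on a cpo α, f ⊑ g (in the pointwise order) if and only if the image of f is contained in the image of g. -/

import Mathlib

open OmegaCompletePartialOrder

/-- For deflations `f` and `g` on a cpo, `f ⊑ g` pointwise iff the image of `f`
is contained in the image of `g`. -/
theorem deflation_le_iff_range_subset {α : Type*} [OmegaCompletePartialOrder α]
    (f g : α → α)
    (hf : OmegaCompletePartialOrder.ωScottContinuous f)
    (hg : OmegaCompletePartialOrder.ωScottContinuous g)
    (hf_idem : ∀ x, f (f x) = f x) (hf_le : ∀ x, f x ≤ x)
    (hg_idem : ∀ x, g (g x) = g x) (hg_le : ∀ x, g x ≤ x) :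
    (∀ x, f x ≤ g x) ↔ Set.range f ⊆ Set.range g := by
  have hgm := hg.monotone
  constructor
  · rintro h y ⟨x, rfl⟩
    refine ⟨f x, le_antisymm (hg_le _) ?_⟩
    calc f x = f (f x) := (hf_idem x).symm
      _ ≤ g (f x) := h _
  · intro h x
    obtain ⟨z, hz⟩ := h ⟨x, rfl⟩
    have : g (f x) = f x := by rw [← hz, hg_idem]
    calc f x = g (f x) := this.symm
      _ ≤ g x := hgm (hf_le x)
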